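/- Let G be the averaging operator (G∘f)(z) = (δ(z)/2r) ∫_{z−r}^{z+r} f(u) du (restricting the integral to [-1,1] and normalizing by the measure of the intersection). Suppose g : [-1,1] → ℝ is Lipschitz with constant C and ‖g‖_∞ ≤ M, and δ is differentiable with |δ'| ≤ C_δ and ‖δ‖_∞ ≤ δ̄. Then G∘g is Lipschitz on [-1,1] with constant C_δ·M + δ̄·C. -/
import Mathlib


open MeasureTheory Set

private lemma min_lip_aux (c u v : ℝ) : |min c u - min c v| ≤ |u - v| := by
  rw [min_def, min_def]
  split_ifs <;> rw [abs_le] <;> constructor <;>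
    linarith [le_abs_self (u - v), neg_abs_le (u - v)]

private lemma max_lip_aux (c u v : ℝ) : |max c u - max c v| ≤ |u - v| := by
  rw [max_def, max_def]
  split_ifs <;> rw [abs_le] <;> constructor <;>
    linarith [le_abs_self (u - v), neg_abs_le (u - v)]

private lemma avg_eq_aux (r : ℝ) (hr : 0 < r) (g : ℝ → ℝ) (z : ℝ)
    (hz : z ∈ Icc (-1:ℝ) 1) :
    ((volume (Icc (-1:ℝ) 1 ∩ Ioo (z - r) (z + r))).toReal)⁻¹ *
      ∫ u in Icc (-1:ℝ) 1 ∩ Ioo (z - r) (z + r), g u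
    = ∫ t in (0:ℝ)..1, g ((min 1 (z + r) - max (-1) (z - r)) * t + max (-1) (z - r)) := by
  obtain ⟨hz1, hz2⟩ := hz
  set a := max (-1:ℝ) (z - r) with ha
  set b := min (1:ℝ) (z + r) with hb
  have hab : a < b := by
    rw [ha, hb]
    apply max_lt <;> apply lt_min <;> linarith
  set S := Icc (-1:ℝ) 1 ∩ Ioo (z - r) (z + r) with hS
  have hsub1 : Ioo a b ⊆ S := by
    intro u hu
    obtain ⟨hu1, hu2⟩ := hu
    rw [ha] at hu1; rw [hb] at hu2
    have h1 : -1 < u := lt_of_le_of_lt (le_max_left _ _) hu1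
    have h2 : z - r < u := lt_of_le_of_lt (le_max_right _ _) hu1
    have h3 : u < 1 := lt_of_lt_of_le hu2 (min_le_left _ _)
    have h4 : u < z + r := lt_of_lt_of_le hu2 (min_le_right _ _)
    exact ⟨⟨h1.le, h3.le⟩, h2, h4⟩
  have hsub2 : S ⊆ Icc a b := by
    intro u hu
    obtain ⟨⟨h1, h2⟩, h3, h4⟩ := hu
    exact ⟨max_le h1 h3.le, le_min h2 h4.le⟩
  have hvol : volume S = ENNReal.ofReal (b - a) := by
    refine le_antisymm ?_ ?_
    · calc volume S ≤ volume (Icc a b) := measure_mono hsub2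
        _ = ENNReal.ofReal (b - a) := Real.volume_Icc
    · calc ENNReal.ofReal (b - a) = volume (Ioo a b) := Real.volume_Ioo.symm
        _ ≤ volume S := measure_mono hsub1
  have hSae : S =ᵐ[volume] Ioo a b := by
    rw [MeasureTheory.ae_eq_set]
    constructor
    · refine measure_mono_null ?_ ((Set.toFinite ({a, b} : Set ℝ)).measure_zero volume)
      intro u hu
      obtain ⟨huS, huI⟩ := hu
      have := hsub2 huS
      rcases eq_or_lt_of_le this.1 with h | h
      · exact Or.inl h.symm
      rcases eq_or_lt_of_le this.2 with h' | h'
      · exact Or.inr h'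
      exact absurd ⟨h, h'⟩ huI
    · rw [Set.diff_eq_empty.mpr hsub1]; exact measure_empty
  have hint : ∫ u in S, g u = ∫ u in a..b, g u := by
    rw [MeasureTheory.setIntegral_congr_set hSae,
      intervalIntegral.integral_of_le hab.le,
      MeasureTheory.integral_Ioc_eq_integral_Ioo]
  have hL : b - a ≠ 0 := by linarith
  have hsubst := intervalIntegral.integral_comp_mul_add (a := 0) (b := 1) g hL a
  simp only [mul_zero, zero_add, mul_one] at hsubst
  rw [hsubst, hvol, hint, ENNReal.toReal_ofReal (by linarith)]
  have : b - a + a = b := by ring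
  rw [this, smul_eq_mul]

theorem stmt_1 (r C M Cδ δbar : ℝ) (hr : 0 < r)
    (δ δ' g : ℝ → ℝ)
    (hδderiv : ∀ z, HasDerivAt δ (δ' z) z)
    (hδ' : ∀ z ∈ Icc (-1:ℝ) 1, |δ' z| ≤ Cδ)
    (hδb : ∀ z ∈ Icc (-1:ℝ) 1, |δ z| ≤ δbar)
    (hgLip : ∀ x ∈ Icc (-1:ℝ) 1, ∀ y ∈ Icc (-1:ℝ) 1, |g x - g y| ≤ C * |x - y|)
    (hgb : ∀ z ∈ Icc (-1:ℝ) 1, |g z| ≤ M)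
    (G : ℝ → ℝ)
    (hG : ∀ z, G z = δ z * ((volume (Icc (-1:ℝ) 1 ∩ Ioo (z - r) (z + r))).toReal)⁻¹ *
        ∫ u in Icc (-1:ℝ) 1 ∩ Ioo (z - r) (z + r), g u) :
    ∀ x ∈ Icc (-1:ℝ) 1, ∀ y ∈ Icc (-1:ℝ) 1,
      |G x - G y| ≤ (Cδ * M + δbar * C) * |x - y| := by
  have h01 : (0:ℝ) ∈ Icc (-1:ℝ) 1 := by constructor <;> norm_num
  have h11 : (1:ℝ) ∈ Icc (-1:ℝ) 1 := by constructor <;> norm_num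
  have hM : 0 ≤ M := le_trans (abs_nonneg _) (hgb 0 h01)
  have hC : 0 ≤ C := by
    have := hgLip 1 h11 0 h01
    have h := abs_nonneg (g 1 - g 0)
    simp at this
    linarith
  have hCδ : 0 ≤ Cδ := le_trans (abs_nonneg _) (hδ' 0 h01)
  have hδbar : 0 ≤ δbar := le_trans (abs_nonneg _) (hδb 0 h01)
  -- F z : the averaged value
  set F : ℝ → ℝ := fun z =>
    ∫ t in (0:ℝ)..1, g ((min 1 (z + r) - max (-1) (z - r)) * t + max (-1) (z - r)) with hF
  have hG' : ∀ z ∈ Icc (-1:ℝ) 1, G z = δ z * F z := by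
    intro z hz
    rw [hG z, mul_assoc, avg_eq_aux r hr g z hz]
  -- the affine parametrization maps [0,1] into [-1,1]
  have hmaps : ∀ z ∈ Icc (-1:ℝ) 1, ∀ t ∈ Icc (0:ℝ) 1,
      (min 1 (z + r) - max (-1) (z - r)) * t + max (-1) (z - r) ∈ Icc (-1:ℝ) 1 := by
    intro z hz t ht
    obtain ⟨hz1, hz2⟩ := hz
    obtain ⟨ht0, ht1⟩ := ht
    set a := max (-1:ℝ) (z - r)
    set b := min (1:ℝ) (z + r)
    have ha1 : -1 ≤ a := le_max_left _ _
    have hb1 : b ≤ 1 := min_le_left _ _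
    have hab : a < b := by
      apply max_lt <;> apply lt_min <;> linarith
    have h1 : 0 ≤ (b - a) * t := mul_nonneg (by linarith) ht0
    have h2 : (b - a) * t ≤ b - a := by nlinarith
    constructor <;> nlinarith
  -- boundedness of F
  have hFb : ∀ z ∈ Icc (-1:ℝ) 1, |F z| ≤ M := by
    intro z hz
    have := intervalIntegral.norm_integral_le_of_norm_le_const (a := 0) (b := 1)
      (C := M) (f := fun t => g ((min 1 (z + r) - max (-1) (z - r)) * t + max (-1) (z - r)))
      (fun t ht => by
        rw [Set.uIoc_of_le zero_le_one] at ht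
        exact hgb _ (hmaps z hz t ⟨ht.1.le, ht.2⟩))
    simpa using this
  intro x hx y hy
  -- Lipschitz bound for F
  have hgc : ContinuousOn g (Icc (-1:ℝ) 1) := by
    have : LipschitzOnWith (Real.toNNReal C) g (Icc (-1:ℝ) 1) := by
      rw [lipschitzOnWith_iff_dist_le_mul]
      intro u hu v hv
      rw [Real.dist_eq, Real.dist_eq, Real.coe_toNNReal C hC]
      exact hgLip u hu v hv
    exact this.continuousOn
  have hinteg : ∀ z ∈ Icc (-1:ℝ) 1, IntervalIntegrable
      (fun t => g ((min 1 (z + r) - max (-1) (z - r)) * t + max (-1) (z - r))) volume 0 1 := by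
    intro z hz
    apply ContinuousOn.intervalIntegrable
    rw [Set.uIcc_of_le zero_le_one]
    apply hgc.comp ((continuous_const.mul continuous_id).add continuous_const).continuousOn
    intro t ht
    exact hmaps z hz t ht
  have hFlip : |F x - F y| ≤ C * |x - y| := by
    have hax : ∀ t : ℝ, t ∈ Icc (0:ℝ) 1 →
        |((min 1 (x + r) - max (-1) (x - r)) * t + max (-1) (x - r)) -
         ((min 1 (y + r) - max (-1) (y - r)) * t + max (-1) (y - r))| ≤ |x - y| := by
      intro t ht
      obtain ⟨ht0, ht1⟩ := ht
      have hb : |min 1 (x + r) - min 1 (y + r)| ≤ |x - y| := by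
        have := min_lip_aux 1 (x + r) (y + r)
        have h : x + r - (y + r) = x - y := by ring
        rwa [h] at this
      have ha : |max (-1:ℝ) (x - r) - max (-1) (y - r)| ≤ |x - y| := by
        have := max_lip_aux (-1:ℝ) (x - r) (y - r)
        have h : x - r - (y - r) = x - y := by ring
        rwa [h] at this
      have key : (min 1 (x + r) - max (-1) (x - r)) * t + max (-1:ℝ) (x - r) -
          ((min 1 (y + r) - max (-1) (y - r)) * t + max (-1) (y - r))
          = t * (min 1 (x + r) - min 1 (y + r)) +
            (1 - t) * (max (-1:ℝ) (x - r) - max (-1) (y - r)) := by ring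
      rw [key]
      calc |t * (min 1 (x + r) - min 1 (y + r)) +
            (1 - t) * (max (-1:ℝ) (x - r) - max (-1) (y - r))|
          ≤ |t * (min 1 (x + r) - min 1 (y + r))| +
            |(1 - t) * (max (-1:ℝ) (x - r) - max (-1) (y - r))| := abs_add_le _ _
        _ = t * |min 1 (x + r) - min 1 (y + r)| +
            (1 - t) * |max (-1:ℝ) (x - r) - max (-1) (y - r)| := by
            rw [abs_mul, abs_mul, abs_of_nonneg ht0,
              abs_of_nonneg (show (0:ℝ) ≤ 1 - t from by linarith)]
        _ ≤ t * |x - y| + (1 - t) * |x - y| := by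
            apply add_le_add
            · exact mul_le_mul_of_nonneg_left hb ht0
            · exact mul_le_mul_of_nonneg_left ha (by linarith)
        _ = |x - y| := by ring
    have hsub : F x - F y = ∫ t in (0:ℝ)..1,
        (g ((min 1 (x + r) - max (-1) (x - r)) * t + max (-1) (x - r)) -
         g ((min 1 (y + r) - max (-1) (y - r)) * t + max (-1) (y - r))) := by
      rw [hF]
      rw [intervalIntegral.integral_sub (hinteg x hx) (hinteg y hy)]
    rw [hsub]
    have := intervalIntegral.norm_integral_le_of_norm_le_const (a := 0) (b := 1)
      (C := C * |x - y|)
      (f := fun t => g ((min 1 (x + r) - max (-1) (x - r)) * t + max (-1) (x - r)) -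
         g ((min 1 (y + r) - max (-1) (y - r)) * t + max (-1) (y - r)))
      (fun t ht => by
        rw [Set.uIoc_of_le zero_le_one] at ht
        have htI : t ∈ Icc (0:ℝ) 1 := ⟨ht.1.le, ht.2⟩
        have h1 := hmaps x hx t htI
        have h2 := hmaps y hy t htI
        calc ‖g ((min 1 (x + r) - max (-1) (x - r)) * t + max (-1) (x - r)) -
              g ((min 1 (y + r) - max (-1) (y - r)) * t + max (-1) (y - r))‖
            ≤ C * |((min 1 (x + r) - max (-1) (x - r)) * t + max (-1) (x - r)) -
              ((min 1 (y + r) - max (-1) (y - r)) * t + max (-1) (y - r))| := hgLip _ h1 _ h2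
          _ ≤ C * |x - y| := mul_le_mul_of_nonneg_left (hax t htI) hC)
    simpa using this
  -- Lipschitz bound for δ
  have hδlip : |δ x - δ y| ≤ Cδ * |x - y| := by
    have := (convex_Icc (-1:ℝ) 1).norm_image_sub_le_of_norm_hasDerivWithin_le
      (f := δ) (f' := δ')
      (fun z hz => (hδderiv z).hasDerivWithinAt)
      (fun z hz => by rw [Real.norm_eq_abs]; exact hδ' z hz)
      hy hx
    rwa [Real.norm_eq_abs, Real.norm_eq_abs] at this
  -- combine
  rw [hG' x hx, hG' y hy]
  have hdecomp : δ x * F x - δ y * F y = (δ x - δ y) * F x + δ y * (F x - F y) := by ring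
  rw [hdecomp]
  calc |(δ x - δ y) * F x + δ y * (F x - F y)|
      ≤ |(δ x - δ y) * F x| + |δ y * (F x - F y)| := abs_add_le _ _
    _ = |δ x - δ y| * |F x| + |δ y| * |F x - F y| := by rw [abs_mul, abs_mul]
    _ ≤ (Cδ * |x - y|) * M + δbar * (C * |x - y|) := by
        apply add_le_add
        · exact mul_le_mul hδlip (hFb x hx) (abs_nonneg _)
            (mul_nonneg hCδ (abs_nonneg _))
        · exact mul_le_mul (hδb y hy) hFlip (abs_nonneg _) hδbar
    _ = (Cδ * M + δbar * C) * |x - y| := by ring
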